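/- Let τ be a uniformly random permutation of {1,...,n}, e_i the standard basis vectors of ℝ^n, m_i = 𝟙 - ne_i, and M_i = I + (1/n)m_i e_iᵀ. Then 𝔼_τ[M_{τ(1)} M_{τ(2)} ⋯ M_{τ(n)} 𝟙] = 𝟙. -/

import Mathlib

open Matrix Finset Equiv

noncomputable def ExpPerm.mv (n : ℕ) (i : Fin n) : Fin n → ℝ :=
  (fun _ => (1 : ℝ)) - (n : ℝ) • (Pi.single i 1 : Fin n → ℝ)

noncomputable def ExpPerm.Mm (n : ℕ) (i : Fin n) : Matrix (Fin n) (Fin n) ℝ :=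
  (1 : Matrix (Fin n) (Fin n) ℝ) +
    (n : ℝ)⁻¹ • Matrix.vecMulVec (ExpPerm.mv n i) (Pi.single i 1)

namespace ExpPerm

variable (n : ℕ)

lemma Mm_conj (τ : Equiv.Perm (Fin n)) (k : Fin n) :
    Mm n (τ k) = (Mm n k).submatrix τ.symm τ.symm := by
  ext a b
  simp only [Mm, mv, Matrix.add_apply, Matrix.one_apply, Matrix.smul_apply,
    Matrix.vecMulVec_apply, Pi.sub_apply, Pi.smul_apply, Pi.single_apply,
    Matrix.submatrix_apply, smul_eq_mul]
  by_cases h1 : a = b <;> by_cases h2 : a = τ k <;> by_cases h3 : b = τ k <;>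
    simp [h1, h2, h3, Equiv.symm_apply_eq, Equiv.eq_symm_apply]

lemma sum_mv (i : Fin n) : ∑ a, mv n i a = 0 := by
  simp [mv, Finset.sum_sub_distrib, ← Finset.mul_sum, Finset.sum_pi_single',
    Finset.card_univ]

lemma mulVec_Mm (i : Fin n) (v : Fin n → ℝ) :
    (Mm n i).mulVec v = v + ((n : ℝ)⁻¹ * v i) • mv n i := by
  rw [Mm, Matrix.add_mulVec, Matrix.one_mulVec, Matrix.smul_mulVec]
  funext a
  simp only [Pi.add_apply, Pi.smul_apply, smul_eq_mul, Matrix.mulVec,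
    dotProduct, Matrix.vecMulVec_apply, Pi.single_apply]
  rw [Finset.sum_congr rfl (fun j _ => show mv n i a * (if j = i then (1:ℝ) else 0) * v j
      = if j = i then mv n i a * v j else 0 by split <;> simp)]
  rw [Finset.sum_ite_eq' Finset.univ i (fun j => mv n i a * v j)]
  simp [mul_comm]
  ring

lemma sum_mulVec (i : Fin n) (v : Fin n → ℝ) :
    ∑ a, (Mm n i).mulVec v a = ∑ a, v a := by
  simp [mulVec_Mm, Finset.sum_add_distrib, ← Finset.mul_sum, sum_mv]

lemma sum_prod_mulVec (L : List (Fin n)) (v : Fin n → ℝ) :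
    ∑ a, ((L.map (Mm n)).prod.mulVec v) a = ∑ a, v a := by
  induction L generalizing v with
  | nil => simp
  | cons h t ih =>
    rw [List.map_cons, List.prod_cons, ← Matrix.mulVec_mulVec, sum_mulVec, ih]

lemma prod_submatrix (e : Fin n ≃ Fin n) (L : List (Matrix (Fin n) (Fin n) ℝ)) :
    (L.map (fun A => A.submatrix e e)).prod = L.prod.submatrix e e := by
  induction L with
  | nil => simp [Matrix.submatrix_one_equiv]
  | cons h t ih => rw [List.map_cons, List.prod_cons, List.prod_cons, ih,
      Matrix.submatrix_mul_equiv]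

end ExpPerm

theorem expected_permuted_product_ones
    (n : ℕ) (hn : 1 ≤ n) :
    ((n.factorial : ℝ))⁻¹ •
        ∑ τ : Equiv.Perm (Fin n),
          ((List.ofFn (fun k : Fin n =>
              (1 : Matrix (Fin n) (Fin n) ℝ) +
                (n : ℝ)⁻¹ • Matrix.vecMulVec
                  ((fun _ => (1 : ℝ)) - (n : ℝ) • (Pi.single (τ k) 1 : Fin n → ℝ))
                  (Pi.single (τ k) 1))).prod).mulVec (fun _ => (1 : ℝ))
      = fun _ => (1 : ℝ) := by
  obtain ⟨m, rfl⟩ : ∃ m, n = m + 1 := ⟨n - 1, (Nat.succ_pred_eq_of_pos hn).symm⟩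
  set n := m + 1
  show ((n.factorial : ℝ))⁻¹ •
      ∑ τ : Equiv.Perm (Fin n),
        ((List.ofFn (fun k : Fin n => ExpPerm.Mm n (τ k))).prod).mulVec (fun _ => (1 : ℝ))
    = fun _ => (1 : ℝ)
  set A := (List.ofFn (ExpPerm.Mm n)).prod with hA
  set w := A.mulVec (fun _ => (1 : ℝ)) with hw
  have hsumw : ∑ k, w k = (n : ℝ) := by
    rw [hw, hA, List.ofFn_eq_map, ExpPerm.sum_prod_mulVec]
    simp [Finset.card_univ]
  have key : ∀ τ : Equiv.Perm (Fin n),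
      ((List.ofFn (fun k : Fin n => ExpPerm.Mm n (τ k))).prod).mulVec (fun _ => (1 : ℝ))
      = fun i => w (τ.symm i) := by
    intro τ
    have h1 : (List.ofFn (fun k : Fin n => ExpPerm.Mm n (τ k)))
        = (List.ofFn (ExpPerm.Mm n)).map (fun B => B.submatrix τ.symm τ.symm) := by
      rw [List.map_ofFn]
      congr 1
      funext k
      exact ExpPerm.Mm_conj n τ k
    rw [h1, ExpPerm.prod_submatrix, Matrix.submatrix_mulVec_equiv]
    rfl
  funext i
  simp only [Pi.smul_apply, Finset.sum_apply, key, smul_eq_mul]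
  have h2 : ∑ τ : Equiv.Perm (Fin n), w (τ.symm i) = ∑ σ : Equiv.Perm (Fin n), w (σ i) :=
    Fintype.sum_equiv (Equiv.inv (Equiv.Perm (Fin n))) _ _ (fun τ => rfl)
  have h3 : ∑ σ : Equiv.Perm (Fin n), w (σ i) = ∑ σ : Equiv.Perm (Fin n), w (σ 0) := by
    refine Fintype.sum_equiv (Equiv.mulRight (Equiv.swap 0 i)) _ _ (fun σ => ?_)
    simp [Equiv.Perm.mul_apply, Equiv.swap_apply_right]
  have h4 : ∑ σ : Equiv.Perm (Fin n), w (σ 0)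
      = (m.factorial : ℝ) * ∑ p : Fin n, w p := by
    rw [← (Equiv.Perm.decomposeFin (n := m)).symm.sum_comp (fun σ => w (σ 0))]
    rw [Fintype.sum_prod_type]
    simp only [Equiv.Perm.decomposeFin_symm_apply_zero]
    simp [Fintype.card_perm, Fintype.card_fin, ← Finset.mul_sum]
    left; rfl
  rw [h2, h3, h4, hsumw]
  have hfac : (n.factorial : ℝ) ≠ 0 := Nat.cast_ne_zero.mpr (Nat.factorial_ne_zero n)
  have : (n.factorial : ℝ) = (m.factorial : ℝ) * (n : ℝ) := by
    rw [show n.factorial = n * m.factorial from Nat.factorial_succ m]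
    push_cast; ring
  rw [this] at hfac ⊢
  field_simp
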